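/- Let P be an effectively closed (Π⁰₁) subset of Cantor space of positive measure. If X is a Martin-Löf random infinite binary sequence, then some tail of X (i.e., the sequence Y with Y(n) = X(n+k) for some k) belongs to P. -/

import Mathlib

open MeasureTheory ENNReal

/-! ### Cantor space and the uniform (coin-flipping) measure -/

/-- The binary digits of a real number in `[0,1)`, giving a point of Cantor space. -/
noncomputable def binaryDigits (x : ℝ) : ℕ → Bool :=
  fun n => decide (⌊x * 2 ^ (n + 1)⌋ % 2 = 1)

/-- The uniform (Lebesgue / coin-flipping) measure on Cantor space `2^ω`,
obtained as the pushforward of Lebesgue measure on `[0,1)` under binary expansion. -/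
noncomputable def μCantor : Measure (ℕ → Bool) :=
  Measure.map binaryDigits (volume.restrict (Set.Ico (0 : ℝ) 1))

/-- `σ` is an initial segment of the infinite sequence `X`. -/
def IsPrefixOf (σ : List Bool) (X : ℕ → Bool) : Prop :=
  ∀ i : Fin σ.length, X i = σ.get i

/-- The cylinder determined by a finite binary string. -/
def cylinder (σ : List Bool) : Set (ℕ → Bool) := {X | IsPrefixOf σ X}

/-- The open set generated by a set of finite binary strings. -/
def openOf (S : Set (List Bool)) : Set (ℕ → Bool) := ⋃ σ ∈ S, cylinder σ

/-- The density of a set `P` above the string `τ`: `μ([τ] ∩ P) · 2^{|τ|}`. -/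
noncomputable def dens (τ : List Bool) (P : Set (ℕ → Bool)) : ℝ≥0∞ :=
  μCantor (cylinder τ ∩ P) * 2 ^ τ.length

/-- The length-`n` initial segment of `X`, as a finite binary string. -/
def strPrefix (X : ℕ → Bool) (n : ℕ) : List Bool := (List.range n).map X

/-- A set of strings is prefix-free if no element is a proper prefix of another. -/
def PrefixFreeSet (S : Set (List Bool)) : Prop :=
  ∀ σ ∈ S, ∀ τ ∈ S, σ <+: τ → σ = τ

/-- The weight `∑_{σ ∈ S} 2^{-|σ|}` of a set of strings. -/
noncomputable def weight (S : Set (List Bool)) : ℝ≥0∞ :=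
  ∑' σ : S, 2⁻¹ ^ (σ : List Bool).length

/-- A set of strings is bounded if its weight is finite. -/
def BoundedStr (S : Set (List Bool)) : Prop := weight S < ⊤

/-- The tail `X(·+k)` of an infinite binary sequence. -/
def tailSeq (X : ℕ → Bool) (k : ℕ) : ℕ → Bool := fun n => X (n + k)

/-! ### Oracle computability -/

/-- The `e`-th computably enumerable set of naturals (the domain of the `e`-th
partial computable function). -/
def WEnum (e n : ℕ) : Prop := ((Denumerable.ofNat Nat.Partrec.Code e).eval n).Dom

/-- `OracleComputes e X n m` holds if the `e`-th Turing functional with oracle `X`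
outputs `m` on input `n`; a Turing functional is presented by the c.e. set `W_e`
of coded axioms `(σ, n, m)`, and `Γ_e^X(n) = m` iff some initial segment `σ` of `X`
has `(σ, n, m) ∈ W_e`. -/
def OracleComputes (e : ℕ) (X : ℕ → Bool) (n m : ℕ) : Prop :=
  ∃ σ : List Bool, IsPrefixOf σ X ∧
    WEnum e (Nat.pair (Encodable.encode σ) (Nat.pair n m))

def natOfBool (b : Bool) : ℕ := cond b 1 0

/-- `f : ℕ → ℕ` is computable with oracle `A`: some Turing functional with oracle `A`
has graph exactly `f`. -/
def FnComputableIn (f : ℕ → ℕ) (A : ℕ → Bool) : Prop :=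
  ∃ e, ∀ n m, OracleComputes e A n m ↔ m = f n

/-- Turing reducibility `B ≤_T A` for subsets of `ω` (as elements of Cantor space). -/
def TuringLE (B A : ℕ → Bool) : Prop := FnComputableIn (fun n => natOfBool (B n)) A

/-- Turing equivalence. -/
def TuringEquiv (A B : ℕ → Bool) : Prop := TuringLE A B ∧ TuringLE B A

/-- The Turing join `A ⊕ B`. -/
def joinSet (A B : ℕ → Bool) : ℕ → Bool :=
  fun n => if n % 2 = 0 then A (n / 2) else B (n / 2)

open Classical in
/-- The Turing jump `A′ = {e : Γ_e^A(e)↓}`. -/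
noncomputable def jump (A : ℕ → Bool) : ℕ → Bool :=
  fun e => decide (∃ m, OracleComputes e A e m)

/-- The empty oracle. -/
def emptyOracle : ℕ → Bool := fun _ => false

/-- The halting problem `∅′`. -/
noncomputable def zeroJump : ℕ → Bool := jump emptyOracle

/-- A set is computable iff it is Turing reducible to the empty oracle. -/
def ComputableSet (A : ℕ → Bool) : Prop := TuringLE A emptyOracle

/-- A set of naturals is c.e. in `A`. -/
def CeIn (A : ℕ → Bool) (S : Set ℕ) : Prop :=
  ∃ e, ∀ n, n ∈ S ↔ ∃ m, OracleComputes e A n m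

/-- A set of strings is c.e. in `A`. -/
def CeStrIn (A : ℕ → Bool) (S : Set (List Bool)) : Prop :=
  ∃ e, ∀ σ : List Bool, σ ∈ S ↔ ∃ m, OracleComputes e A (Encodable.encode σ) m

/-- A c.e. set of strings. -/
def CeStr (S : Set (List Bool)) : Prop := CeStrIn emptyOracle S

/-! ### Π⁰₁ classes, Martin-Löf randomness, K-triviality -/

/-- A `Π⁰₁(A)` class: the complement of the union of cylinders over an `A`-c.e.
set of strings. -/
def Pi01In (A : ℕ → Bool) (P : Set (ℕ → Bool)) : Prop :=
  ∃ S : Set (List Bool), CeStrIn A S ∧ P = (openOf S)ᶜ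

/-- A `Π⁰₁` class. -/
def Pi01 (P : Set (ℕ → Bool)) : Prop := Pi01In emptyOracle P

/-- The `n`-th level of the `e`-th `A`-effective sequence of open sets. -/
def testLevel (e : ℕ) (A : ℕ → Bool) (n : ℕ) : Set (ℕ → Bool) :=
  openOf {σ | ∃ m, OracleComputes e A (Nat.pair n (Encodable.encode σ)) m}

/-- A Martin-Löf test relative to `A`: a uniformly `A`-c.e. sequence of open sets
`G n` with `μ(G n) ≤ 2^{-n}`. -/
def MLTestIn (A : ℕ → Bool) (G : ℕ → Set (ℕ → Bool)) : Prop :=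
  (∃ e, ∀ n, G n = testLevel e A n) ∧ ∀ n, μCantor (G n) ≤ 2⁻¹ ^ n

/-- `X` is Martin-Löf random relative to `A`: it passes every `A`-Martin-Löf test. -/
def MLRandomIn (A X : ℕ → Bool) : Prop :=
  ∀ G : ℕ → Set (ℕ → Bool), MLTestIn A G → ∃ n, X ∉ G n

/-- `X` is Martin-Löf random. -/
def MLRandom (X : ℕ → Bool) : Prop := MLRandomIn emptyOracle X

/-- The domain of the `e`-th machine, viewed as a set of binary strings. -/
def machineDom (e : ℕ) : Set (List Bool) :=
  {σ | ((Denumerable.ofNat Nat.Partrec.Code e).eval (Encodable.encode σ)).Dom}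

/-- The `e`-th machine is prefix-free. -/
def PrefixFreeMachine (e : ℕ) : Prop := PrefixFreeSet (machineDom e)

/-- Prefix-free Kolmogorov complexity (defined, up to an additive constant, as the
least `|σ| + 2e + 2` over prefix-free machines `e` and programs `σ` producing `x`). -/
noncomputable def Kcpx (x : ℕ) : ℕ :=
  sInf {k | ∃ e, ∃ σ : List Bool, PrefixFreeMachine e ∧
    x ∈ (Denumerable.ofNat Nat.Partrec.Code e).eval (Encodable.encode σ) ∧
    k = σ.length + 2 * e + 2}

/-- `K(n)` means `K(1^n)`. -/
noncomputable def KofNat (n : ℕ) : ℕ := Kcpx (Encodable.encode (List.replicate n true))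

/-- `A` is K-trivial: `K(A↾n) ≤ K(n) + c` for some constant `c`. -/
def KTrivial (A : ℕ → Bool) : Prop :=
  ∃ c, ∀ n, Kcpx (Encodable.encode (strPrefix A n)) ≤ KofNat n + c

set_option linter.unusedVariables false
set_option linter.unnecessarySimpa false
-- ### basic prefix lemmas

lemma isPrefixOf_nil (X : ℕ → Bool) : IsPrefixOf [] X := fun i => i.elim0

lemma isPrefixOf_cons {b : Bool} {σ : List Bool} {X : ℕ → Bool} :
    IsPrefixOf (b :: σ) X ↔ X 0 = b ∧ IsPrefixOf σ (fun n => X (n + 1)) := by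
  constructor
  · intro h
    refine ⟨h ⟨0, Nat.succ_pos _⟩, fun i => ?_⟩
    have := h ⟨i.1 + 1, by simpa using Nat.succ_lt_succ i.2⟩
    simpa using this
  · rintro ⟨h0, h⟩ i
    rcases i with ⟨_ | j, hj⟩
    · simpa using h0
    · have := h ⟨j, by simpa using Nat.lt_of_succ_lt_succ hj⟩
      simpa using this

-- ### digit shift

lemma digit_succ (x : ℝ) (n : ℕ) :
    binaryDigits x (n + 1) = binaryDigits (Int.fract (2 * x)) n := by
  unfold binaryDigits
  have h1 : Int.fract (2 * x) * 2 ^ (n + 1)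
      = x * 2 ^ (n + 1 + 1) - (↑(⌊2 * x⌋ * 2 ^ (n + 1)) : ℝ) := by
    rw [Int.fract]; push_cast; ring
  rw [h1, Int.floor_sub_intCast]
  obtain ⟨c, hc⟩ : (2 : ℤ) ∣ ⌊2 * x⌋ * 2 ^ (n + 1) := ⟨⌊2 * x⌋ * 2 ^ n, by ring⟩
  rw [hc]
  generalize ⌊x * 2 ^ (n + 1 + 1)⌋ = A
  congr 1
  ext
  omega

lemma shift_digits {x : ℝ} :
    (fun n => binaryDigits x (n + 1)) = binaryDigits (Int.fract (2 * x)) := by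
  funext n; exact digit_succ x n

def bval (b : Bool) : ℝ := cond b 1 0

lemma floor_two_mul_eq {x : ℝ} (hx : x ∈ Set.Ico (0:ℝ) 1) :
    ⌊2 * x⌋ = 0 ∨ ⌊2 * x⌋ = 1 := by
  obtain ⟨h0, h1⟩ := hx
  have l0 : (0:ℤ) ≤ ⌊2 * x⌋ := Int.le_floor.2 (by push_cast; linarith)
  have l1 : ⌊2 * x⌋ < 2 := Int.floor_lt.2 (by push_cast; linarith)
  omega

lemma digit0_eq {x : ℝ} (hx : x ∈ Set.Ico (0:ℝ) 1) {b : Bool} :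
    binaryDigits x 0 = b ↔ ⌊2 * x⌋ = (cond b 1 0 : ℤ) := by
  have h2 : x * 2 ^ (0 + 1) = 2 * x := by ring
  rcases floor_two_mul_eq hx with h | h <;>
    · simp only [binaryDigits, h2, h]
      cases b <;> simp

-- F σ : the preimage
def Fset (σ : List Bool) : Set ℝ :=
  binaryDigits ⁻¹' (_root_.cylinder σ) ∩ Set.Ico (0:ℝ) 1

lemma Fset_nil : Fset [] = Set.Ico (0:ℝ) 1 := by
  ext x
  constructor
  · rintro ⟨-, h⟩; exact h
  · intro h; exact ⟨isPrefixOf_nil _, h⟩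

lemma Fset_subset (σ : List Bool) : Fset σ ⊆ Set.Ico (0:ℝ) 1 :=
  Set.inter_subset_right

lemma Fset_cons (b : Bool) (σ : List Bool) :
    Fset (b :: σ) = (fun x => 2 * x - bval b) ⁻¹' (Fset σ) := by
  ext x
  constructor
  · rintro ⟨hpre, hx⟩
    have hcons := isPrefixOf_cons.1 hpre
    have hb : ⌊2 * x⌋ = (cond b 1 0 : ℤ) := (digit0_eq hx).1 hcons.1
    have hfr : Int.fract (2 * x) = 2 * x - bval b := by
      rw [Int.fract, hb]; cases b <;> simp [bval]
    have hy : 2 * x - bval b ∈ Set.Ico (0:ℝ) 1 := by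
      rw [← hfr]; exact ⟨Int.fract_nonneg _, Int.fract_lt_one _⟩
    refine ⟨?_, hy⟩
    show IsPrefixOf σ (binaryDigits (2 * x - bval b))
    rw [← hfr, ← shift_digits]
    exact hcons.2
  · rintro ⟨hpre, hy⟩
    set y := 2 * x - bval b with hydef
    have hbv : (0:ℝ) ≤ bval b ∧ bval b ≤ 1 := by cases b <;> simp [bval]
    have hx : x ∈ Set.Ico (0:ℝ) 1 := by
      obtain ⟨y0, y1⟩ := hy
      constructor <;> [nlinarith [hbv.1]; nlinarith [hbv.2]]
    have hfl : ⌊2 * x⌋ = (cond b 1 0 : ℤ) := by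
      apply Int.floor_eq_iff.2
      · obtain ⟨y0, y1⟩ := hy
        cases b <;> constructor <;> simp [bval] at y0 y1 ⊢ <;> linarith
    have hfr : Int.fract (2 * x) = y := by
      rw [Int.fract, hfl]; cases b <;> simp [bval, hydef]
    refine ⟨?_, hx⟩
    show IsPrefixOf (b :: σ) (binaryDigits x)
    rw [isPrefixOf_cons]
    refine ⟨(digit0_eq hx).2 hfl, ?_⟩
    rw [shift_digits, hfr]
    exact hpre

-- ### measurability

lemma measurable_binaryDigits : Measurable binaryDigits := by
  apply measurable_pi_lambda
  intro n
  have : (fun x => binaryDigits x n)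
      = (fun z : ℤ => decide (z % 2 = 1)) ∘ (fun x : ℝ => ⌊x * 2 ^ (n+1)⌋) := rfl
  rw [this]
  exact measurable_from_top.comp (Int.measurable_floor.comp (measurable_id.mul_const _))

lemma measurableSet_cylinder (σ : List Bool) : MeasurableSet (_root_.cylinder σ) := by
  have : _root_.cylinder σ = ⋂ i : Fin σ.length, {X : ℕ → Bool | X i = σ.get i} := by
    ext X
    simp only [Set.mem_iInter, Set.mem_setOf_eq]
    rfl
  rw [this]
  refine MeasurableSet.iInter fun i => ?_
  have : {X : ℕ → Bool | X i = σ.get i} = (fun X : ℕ → Bool => X i) ⁻¹' {σ.get i} := rfl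
  rw [this]
  exact (measurable_pi_apply (i : ℕ)) (measurableSet_singleton (σ.get i))

lemma measurableSet_Fset (σ : List Bool) : MeasurableSet (Fset σ) :=
  (measurable_binaryDigits (measurableSet_cylinder σ)).inter measurableSet_Ico

-- ### volume of Fset

lemma volume_preimage_affine {c : ℝ} {s : Set ℝ} (hs : MeasurableSet s) :
    volume ((fun x => 2 * x - c) ⁻¹' s) = 2⁻¹ * volume s := by
  have h1 : (fun x => 2 * x - c) = (fun y => y - c) ∘ (fun x : ℝ => 2 * x) := rfl
  rw [h1, Set.preimage_comp]
  have h2 : MeasurableSet ((fun y : ℝ => y - c) ⁻¹' s) :=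
    (measurable_id.sub_const c) hs
  have h3 : volume ((fun x : ℝ => 2 * x) ⁻¹' ((fun y : ℝ => y - c) ⁻¹' s))
      = (Measure.map (fun x : ℝ => 2 * x) volume) ((fun y : ℝ => y - c) ⁻¹' s) := by
    rw [Measure.map_apply (measurable_const_mul 2) h2]
  rw [h3, Real.map_volume_mul_left (two_ne_zero)]
  simp only [Measure.smul_apply, smul_eq_mul]
  have h4 : volume ((fun y : ℝ => y - c) ⁻¹' s) = volume s := by
    have : (fun y : ℝ => y - c) ⁻¹' s = (fun y : ℝ => y + (-c)) ⁻¹' s := by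
      simp [sub_eq_add_neg]
    rw [this, measure_preimage_add_right]
  rw [h4]
  congr 1
  rw [abs_of_pos (by norm_num : ((2:ℝ)⁻¹) > 0)]
  rw [ENNReal.ofReal_inv_of_pos (by norm_num : (0:ℝ) < 2)]
  norm_num

lemma volume_Fset (σ : List Bool) : volume (Fset σ) = 2⁻¹ ^ σ.length := by
  induction σ with
  | nil => simp [Fset_nil]
  | cons b σ ih =>
      rw [Fset_cons, volume_preimage_affine (measurableSet_Fset σ), ih]
      simp [pow_succ]
      ring

-- ### μCantor values

lemma μCantor_cylinder (σ : List Bool) :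
    μCantor (_root_.cylinder σ) = 2⁻¹ ^ σ.length := by
  rw [μCantor, Measure.map_apply measurable_binaryDigits (measurableSet_cylinder σ),
    Measure.restrict_apply (measurable_binaryDigits (measurableSet_cylinder σ))]
  exact volume_Fset σ

lemma μCantor_univ : μCantor Set.univ = 1 := by
  rw [μCantor, Measure.map_apply measurable_binaryDigits MeasurableSet.univ]
  simp [Real.volume_Ico]

lemma openOf_eq_iUnion (S : Set (List Bool)) :
    openOf S = ⋃ σ : S, _root_.cylinder σ := by
  rw [openOf, Set.biUnion_eq_iUnion]

lemma measurableSet_openOf (S : Set (List Bool)) : MeasurableSet (openOf S) := by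
  rw [openOf_eq_iUnion]
  exact MeasurableSet.iUnion fun σ => measurableSet_cylinder σ

lemma μ_openOf_le_weight (S : Set (List Bool)) : μCantor (openOf S) ≤ weight S := by
  rw [openOf_eq_iUnion]
  refine le_trans (measure_iUnion_le _) ?_
  rw [weight]
  exact ENNReal.tsum_le_tsum fun σ => le_of_eq (μCantor_cylinder σ)

-- two prefixes of the same sequence are comparable
lemma prefix_of_both {σ τ : List Bool} {X : ℕ → Bool} (hσ : IsPrefixOf σ X)
    (hτ : IsPrefixOf τ X) (h : σ.length ≤ τ.length) : σ <+: τ := by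
  rw [List.prefix_iff_eq_take]
  apply List.ext_getElem
  · rw [List.length_take]; omega
  · intro i h1 h2
    have hi : i < σ.length := h1
    rw [List.getElem_take]
    have e1 := hσ ⟨i, hi⟩
    have e2 := hτ ⟨i, by omega⟩
    simp only [List.get_eq_getElem] at e1 e2
    rw [← e1, ← e2]

lemma cylinder_disjoint {σ τ : List Bool} (hne : σ ≠ τ)
    (h1 : ¬ σ <+: τ) (h2 : ¬ τ <+: σ) :
    Disjoint (_root_.cylinder σ) (_root_.cylinder τ) := by
  rw [Set.disjoint_left]
  intro X hXσ hXτ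
  rcases le_total σ.length τ.length with h | h
  · exact h1 (prefix_of_both hXσ hXτ h)
  · exact h2 (prefix_of_both hXτ hXσ h)

lemma μ_openOf_prefixFree {S : Set (List Bool)} (h : PrefixFreeSet S) :
    μCantor (openOf S) = weight S := by
  rw [openOf_eq_iUnion]
  rw [measure_iUnion ?_ (fun σ => measurableSet_cylinder _)]
  · rw [weight]
    exact tsum_congr fun σ => μCantor_cylinder σ
  · intro σ τ hne
    have hστ : (σ : List Bool) ≠ (τ : List Bool) := fun e => hne (Subtype.ext e)
    exact cylinder_disjoint hστ
      (fun hp => hστ (h _ σ.2 _ τ.2 hp))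
      (fun hp => hστ ((h _ τ.2 _ σ.2 hp).symm))

-- prefix implies cylinder containment
lemma cylinder_anti {σ τ : List Bool} (h : σ <+: τ) :
    _root_.cylinder τ ⊆ _root_.cylinder σ := by
  intro X hX i
  have hlen : σ.length ≤ τ.length := h.length_le
  have e1 := hX ⟨i, by omega⟩
  simp only [List.get_eq_getElem] at e1 ⊢
  rw [e1]
  exact (h.getElem i.2).symm

lemma isPrefixOf_append {σ ρ : List Bool} {X : ℕ → Bool}
    (h1 : IsPrefixOf σ X) (h2 : IsPrefixOf ρ (fun n => X (n + σ.length))) :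
    IsPrefixOf (σ ++ ρ) X := by
  intro i
  rcases Nat.lt_or_ge (i : ℕ) σ.length with h | h
  · have := h1 ⟨i, h⟩
    simp only [List.get_eq_getElem] at this ⊢
    rw [List.getElem_append_left h]
    exact this
  · have hi : (i : ℕ) - σ.length < ρ.length := by
      have := i.2; simp only [List.length_append] at this; omega
    have := h2 ⟨(i : ℕ) - σ.length, hi⟩
    simp only [List.get_eq_getElem] at this ⊢
    rw [List.getElem_append_right (by omega)]
    have e : (i : ℕ) - σ.length + σ.length = i := by omega
    rw [e] at this
    exact this

/-! ### Stagewise enumeration and the prefix-free refinement -/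

def falseList (k : ℕ) : List Bool := (List.range k).map fun _ => false

lemma isPrefixOf_falseList (k : ℕ) : IsPrefixOf (falseList k) emptyOracle := by
  intro i
  rw [List.get_eq_getElem]
  simp [falseList, emptyOracle]

lemma eq_falseList_of_prefix_empty {σ : List Bool} (h : IsPrefixOf σ emptyOracle) :
    σ = falseList σ.length := by
  apply List.ext_getElem
  · simp [falseList]
  · intro i h1 h2
    have := h ⟨i, h1⟩
    simp only [List.get_eq_getElem, emptyOracle] at this
    simp [falseList, ← this]

def sStage (e₀ t : ℕ) (σ : List Bool) : Bool :=
  (List.range (t+1)).any fun k =>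
    (List.range (t+1)).any fun m =>
      (List.range (t+1)).any fun s =>
        (Nat.Partrec.Code.evaln s (Denumerable.ofNat Nat.Partrec.Code e₀)
          (Nat.pair (Encodable.encode (falseList k))
            (Nat.pair (Encodable.encode σ) m))).isSome

def pref (τ : List Bool) (i : ℕ) : List Bool := (List.range i).map fun t => τ.getD t false

def qB (e₀ : ℕ) (τ : List Bool) : Bool :=
  (List.range (τ.length + 1)).any fun i => sStage e₀ τ.length (pref τ i)

def wB (e₀ : ℕ) (τ : List Bool) : Bool :=
  qB e₀ τ && ((List.range τ.length).all fun i => ! qB e₀ (pref τ i))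

def witCheck (e₀ k : ℕ) (σ : List Bool) (L : List (List Bool)) : Bool :=
  (decide (L.length = k)) && (L.all (wB e₀)) && (decide (σ = L.flatten))

def Wset (e₀ : ℕ) : Set (List Bool) := {τ | wB e₀ τ = true}

def Tset (e₀ k : ℕ) : Set (List Bool) :=
  {σ | ∃ L : List (List Bool), witCheck e₀ k σ L = true}

lemma pref_eq_take {τ : List Bool} {i : ℕ} (h : i ≤ τ.length) :
    pref τ i = τ.take i := by
  apply List.ext_getElem
  · simp [pref]; omega
  · intro j h1 h2
    simp only [pref, List.length_map, List.length_range] at h1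
    simp only [pref, List.getElem_map, List.getElem_range, List.getElem_take]
    rw [List.getD_eq_getElem _ _ (by omega : j < τ.length)]

lemma strPrefix_length (X : ℕ → Bool) (n : ℕ) : (strPrefix X n).length = n := by
  simp [strPrefix]

lemma strPrefix_getElem (X : ℕ → Bool) {n i : ℕ} (h : i < n) :
    (strPrefix X n)[i]'(by simp [strPrefix_length]; omega) = X i := by
  simp [strPrefix]

lemma isPrefixOf_strPrefix (X : ℕ → Bool) (n : ℕ) : IsPrefixOf (strPrefix X n) X := by
  intro i
  have hi : (i : ℕ) < n := by have := i.2; simpa [strPrefix_length] using this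
  simp only [List.get_eq_getElem]
  rw [strPrefix_getElem X hi]

lemma pref_strPrefix (X : ℕ → Bool) {i t : ℕ} (h : i ≤ t) :
    pref (strPrefix X t) i = strPrefix X i := by
  rw [pref_eq_take (by simp [strPrefix_length]; omega)]
  apply List.ext_getElem
  · simp [strPrefix_length]; omega
  · intro j h1 h2
    rw [List.getElem_take]
    rw [strPrefix_getElem X (by simp [strPrefix_length] at h1 ⊢; omega),
      strPrefix_getElem X (by simp [strPrefix_length] at h2 ⊢; omega)]

lemma strPrefix_eq_of_isPrefixOf {σ : List Bool} {X : ℕ → Bool} (h : IsPrefixOf σ X) :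
    strPrefix X σ.length = σ := by
  apply List.ext_getElem
  · simp [strPrefix_length]
  · intro i h1 h2
    rw [strPrefix_getElem X (by simpa [strPrefix_length] using h1)]
    have := h ⟨i, h2⟩
    simpa using this

section WithEnum

variable {e₀ : ℕ} {S : Set (List Bool)}
  (hS : ∀ σ : List Bool, σ ∈ S ↔ ∃ m, OracleComputes e₀ emptyOracle (Encodable.encode σ) m)

include hS

lemma sStage_sound {t : ℕ} {σ : List Bool} (h : sStage e₀ t σ = true) : σ ∈ S := by
  simp only [sStage, List.any_eq_true, List.mem_range] at h
  obtain ⟨k, -, m, -, s, -, hev⟩ := h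
  rw [Option.isSome_iff_exists] at hev
  obtain ⟨v, hv⟩ := hev
  have hmem : v ∈ (Denumerable.ofNat Nat.Partrec.Code e₀).eval
      (Nat.pair (Encodable.encode (falseList k)) (Nat.pair (Encodable.encode σ) m)) :=
    Nat.Partrec.Code.evaln_complete.2 ⟨s, hv⟩
  refine (hS σ).2 ⟨m, falseList k, isPrefixOf_falseList k, ?_⟩
  exact Part.dom_iff_mem.2 ⟨v, hmem⟩

lemma sStage_complete {σ : List Bool} (h : σ ∈ S) :
    ∃ t, ∀ t' ≥ t, sStage e₀ t' σ = true := by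
  obtain ⟨m, ρ, hρ, hW⟩ := (hS σ).1 h
  have hρ' : ρ = falseList ρ.length := eq_falseList_of_prefix_empty hρ
  obtain ⟨v, hv⟩ := Part.dom_iff_mem.1 hW
  obtain ⟨s, hs⟩ := Nat.Partrec.Code.evaln_complete.1 hv
  refine ⟨max ρ.length (max m s), fun t' ht' => ?_⟩
  simp only [sStage, List.any_eq_true, List.mem_range]
  refine ⟨ρ.length, by omega, m, by omega, s, by omega, ?_⟩
  rw [← hρ']
  rw [Option.isSome_iff_exists]
  exact ⟨v, hs⟩

lemma Wset_sub_openOf {τ : List Bool} (h : τ ∈ Wset e₀) :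
    ∃ σ ∈ S, σ <+: τ := by
  have hq : qB e₀ τ = true := by
    have := h
    simp only [Wset, Set.mem_setOf_eq, wB, Bool.and_eq_true] at this
    exact this.1
  simp only [qB, List.any_eq_true, List.mem_range] at hq
  obtain ⟨i, hi, hst⟩ := hq
  have hi' : i ≤ τ.length := by omega
  refine ⟨pref τ i, sStage_sound hS hst, ?_⟩
  rw [pref_eq_take hi']
  exact List.take_prefix i τ

lemma openOf_Wset_sub : openOf (Wset e₀) ⊆ openOf S := by
  intro X hX
  simp only [openOf, Set.mem_iUnion] at hX ⊢
  obtain ⟨τ, hτ, hXτ⟩ := hX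
  obtain ⟨σ, hσS, hpre⟩ := Wset_sub_openOf hS hτ
  exact ⟨σ, hσS, cylinder_anti hpre hXτ⟩

lemma mem_openOf_Wset {X : ℕ → Bool} (hX : X ∈ openOf S) : X ∈ openOf (Wset e₀) := by
  simp only [openOf, Set.mem_iUnion] at hX
  obtain ⟨σ, hσS, hXσ⟩ := hX
  obtain ⟨t₀, ht₀⟩ := sStage_complete hS hσS
  have hne : ∃ t, qB e₀ (strPrefix X t) = true := by
    refine ⟨max t₀ σ.length, ?_⟩
    simp only [qB, List.any_eq_true, List.mem_range, strPrefix_length]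
    refine ⟨σ.length, by omega, ?_⟩
    rw [pref_strPrefix X (by omega)]
    rw [strPrefix_eq_of_isPrefixOf hXσ]
    exact ht₀ _ (by omega)
  classical
  let t₁ := Nat.find hne
  have hq1 : qB e₀ (strPrefix X t₁) = true := Nat.find_spec hne
  have hw : wB e₀ (strPrefix X t₁) = true := by
    simp only [wB, Bool.and_eq_true, List.all_eq_true, List.mem_range, strPrefix_length]
    refine ⟨hq1, fun i hi => ?_⟩
    rw [pref_strPrefix X (by omega : i ≤ t₁)]
    have := Nat.find_min hne hi
    simp only [Bool.not_eq_true] at this ⊢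
    simp [this]
  simp only [openOf, Set.mem_iUnion]
  exact ⟨strPrefix X t₁, hw, isPrefixOf_strPrefix X t₁⟩

end WithEnum

lemma Wset_prefixFree (e₀ : ℕ) : PrefixFreeSet (Wset e₀) := by
  intro σ hσ τ hτ hpre
  by_contra hne
  have hlt : σ.length < τ.length :=
    lt_of_le_of_ne hpre.length_le (fun he => hne (List.IsPrefix.eq_of_length hpre he))
  have hσq : qB e₀ σ = true := by
    have := hσ
    simp only [Wset, Set.mem_setOf_eq, wB, Bool.and_eq_true] at this
    exact this.1
  have hτw := hτ
  simp only [Wset, Set.mem_setOf_eq, wB, Bool.and_eq_true, List.all_eq_true,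
    List.mem_range] at hτw
  have := hτw.2 σ.length hlt
  rw [pref_eq_take (by omega), ← List.prefix_iff_eq_take.1 hpre] at this
  simp [hσq] at this

/-! ### Concatenation sets and their weights -/

lemma mem_Tset_iff {e₀ k : ℕ} {σ : List Bool} :
    σ ∈ Tset e₀ k ↔ ∃ L : List (List Bool),
      L.length = k ∧ (∀ ρ ∈ L, ρ ∈ Wset e₀) ∧ σ = L.flatten := by
  simp only [Tset, Set.mem_setOf_eq, witCheck, Bool.and_eq_true, decide_eq_true_eq,
    List.all_eq_true]
  constructor
  · rintro ⟨L, ⟨⟨h1, h2⟩, h3⟩⟩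
    exact ⟨L, h1, fun ρ hρ => h2 ρ hρ, h3⟩
  · rintro ⟨L, h1, h2, h3⟩
    exact ⟨L, ⟨⟨h1, fun ρ hρ => h2 ρ hρ⟩, h3⟩⟩

lemma Tset_zero {e₀ : ℕ} {σ : List Bool} : σ ∈ Tset e₀ 0 ↔ σ = [] := by
  rw [mem_Tset_iff]
  constructor
  · rintro ⟨L, h1, -, h3⟩
    rw [List.length_eq_zero_iff] at h1
    simp [h1] at h3; exact h3
  · rintro rfl
    exact ⟨[], rfl, by simp, by simp⟩

lemma Tset_succ {e₀ k : ℕ} {τ : List Bool} (h : τ ∈ Tset e₀ (k+1)) :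
    ∃ ρ ∈ Wset e₀, ∃ σ ∈ Tset e₀ k, τ = ρ ++ σ := by
  rw [mem_Tset_iff] at h
  obtain ⟨L, h1, h2, h3⟩ := h
  cases L with
  | nil => simp at h1
  | cons ρ L' =>
      refine ⟨ρ, h2 ρ (by simp), L'.flatten, ?_, by simpa using h3⟩
      rw [mem_Tset_iff]
      exact ⟨L', by simpa using h1, fun ρ' hρ' => h2 ρ' (by simp [hρ']), rfl⟩

lemma Tset_append {e₀ k : ℕ} {σ ρ : List Bool} (hσ : σ ∈ Tset e₀ k) (hρ : ρ ∈ Wset e₀) :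
    σ ++ ρ ∈ Tset e₀ (k+1) := by
  rw [mem_Tset_iff] at hσ ⊢
  obtain ⟨L, h1, h2, h3⟩ := hσ
  refine ⟨L ++ [ρ], by simp [h1], ?_, by simp [h3]⟩
  intro ρ' hρ'
  rcases List.mem_append.1 hρ' with h | h
  · exact h2 _ h
  · simp at h; simpa [h]

lemma weight_singleton_nil : weight ({[]} : Set (List Bool)) = 1 := by
  rw [weight]
  rw [tsum_eq_single (⟨[], rfl⟩ : ({[]} : Set (List Bool)))]
  · simp
  · intro b hb
    exact absurd (Subtype.ext (Set.mem_singleton_iff.1 b.2)) hb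

lemma weight_mono {S T : Set (List Bool)} (h : S ⊆ T) : weight S ≤ weight T := by
  rw [weight, weight]
  exact ENNReal.tsum_comp_le_tsum_of_injective
    (f := fun σ : S => (⟨σ, h σ.2⟩ : T)) (fun a b hab => Subtype.ext (by
      simpa using congrArg Subtype.val hab)) (fun τ : T => 2⁻¹ ^ (τ : List Bool).length)

lemma weight_Tset_le (e₀ : ℕ) (k : ℕ) :
    weight (Tset e₀ k) ≤ (weight (Wset e₀)) ^ k := by
  induction k with
  | zero =>
      have hsub : Tset e₀ 0 ⊆ {[]} := fun σ hσ => Tset_zero.1 hσ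
      calc weight (Tset e₀ 0) ≤ weight {[]} := weight_mono hsub
        _ = 1 := weight_singleton_nil
        _ = _ := by simp
  | succ k ih =>
      classical
      -- injection from Tset (k+1) into Wset × Tset k
      have hdec : ∀ τ : Tset e₀ (k+1), ∃ p : Wset e₀ × Tset e₀ k,
          (τ : List Bool) = (p.1 : List Bool) ++ (p.2 : List Bool) := by
        rintro ⟨τ, hτ⟩
        obtain ⟨ρ, hρ, σ, hσ, he⟩ := Tset_succ hτ
        exact ⟨(⟨ρ, hρ⟩, ⟨σ, hσ⟩), he⟩
      choose J hJ using hdec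
      have hinj : Function.Injective J := by
        intro a b hab
        apply Subtype.ext
        rw [hJ a, hJ b, hab]
      have hle : weight (Tset e₀ (k+1)) ≤
          ∑' p : Wset e₀ × Tset e₀ k, 2⁻¹ ^ ((p.1 : List Bool).length + (p.2 : List Bool).length) := by
        rw [weight]
        have : ∀ τ : Tset e₀ (k+1), (2⁻¹ : ℝ≥0∞) ^ (τ : List Bool).length
            = 2⁻¹ ^ (((J τ).1 : List Bool).length + ((J τ).2 : List Bool).length) := by
          intro τ
          rw [hJ τ]
          simp [List.length_append]
        rw [tsum_congr this]
        exact ENNReal.tsum_comp_le_tsum_of_injective hinj _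
      refine le_trans hle ?_
      have hprod : ∑' p : Wset e₀ × Tset e₀ k,
          (2⁻¹ : ℝ≥0∞) ^ ((p.1 : List Bool).length + (p.2 : List Bool).length)
          = weight (Wset e₀) * weight (Tset e₀ k) := by
        have h1 : ∀ p : Wset e₀ × Tset e₀ k,
            (2⁻¹ : ℝ≥0∞) ^ ((p.1 : List Bool).length + (p.2 : List Bool).length)
            = 2⁻¹ ^ (p.1 : List Bool).length * 2⁻¹ ^ (p.2 : List Bool).length := by
          intro p; rw [pow_add]
        rw [tsum_congr h1]
        rw [ENNReal.tsum_prod (f := fun (a : Wset e₀) (b : Tset e₀ k) =>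
          (2⁻¹ : ℝ≥0∞) ^ (a : List Bool).length * 2⁻¹ ^ (b : List Bool).length)]
        rw [weight, weight]
        rw [tsum_congr (fun a => ENNReal.tsum_mul_left)]
        exact ENNReal.tsum_mul_right
      rw [hprod, pow_succ]
      exact mul_le_mul' (le_refl _) ih |>.trans (by rw [mul_comm])

/-! ### Primitive recursiveness of the test generator -/

lemma list_any_eq_foldr {β : Type*} (p : β → Bool) (l : List β) :
    l.any p = l.foldr (fun b r => p b || r) false := by
  induction l with
  | nil => rfl
  | cons b l ih => simp [List.any, ih]

lemma list_all_eq_foldr {β : Type*} (p : β → Bool) (l : List β) :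
    l.all p = l.foldr (fun b r => p b && r) true := by
  induction l with
  | nil => rfl
  | cons b l ih => simp [List.all, ih]

lemma primrec_list_any {α β : Type*} [Primcodable α] [Primcodable β]
    {f : α → List β} {p : α → β → Bool} (hf : Primrec f) (hp : Primrec₂ p) :
    Primrec fun a => (f a).any (p a) := by
  have h : Primrec₂ (fun a (bs : β × Bool) => (p a bs.1 || bs.2)) :=
    (Primrec.or.comp (hp.comp Primrec.fst (Primrec.fst.comp Primrec.snd))
      (Primrec.snd.comp Primrec.snd)).to₂
  have := Primrec.list_foldr hf (Primrec.const false) h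
  exact this.of_eq fun a => (list_any_eq_foldr (p a) (f a)).symm

lemma primrec_list_all {α β : Type*} [Primcodable α] [Primcodable β]
    {f : α → List β} {p : α → β → Bool} (hf : Primrec f) (hp : Primrec₂ p) :
    Primrec fun a => (f a).all (p a) := by
  have h : Primrec₂ (fun a (bs : β × Bool) => (p a bs.1 && bs.2)) :=
    (Primrec.and.comp (hp.comp Primrec.fst (Primrec.fst.comp Primrec.snd))
      (Primrec.snd.comp Primrec.snd)).to₂
  have := Primrec.list_foldr hf (Primrec.const true) h
  exact this.of_eq fun a => (list_all_eq_foldr (p a) (f a)).symm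

lemma primrec_falseList : Primrec falseList := by
  unfold falseList
  exact Primrec.list_map Primrec.list_range ((Primrec.const false).comp Primrec.fst).to₂

lemma primrec_sStage (e₀ : ℕ) : Primrec₂ (sStage e₀) := by
  set c₀ := Denumerable.ofNat Nat.Partrec.Code e₀ with hc₀
  -- innermost predicate, on (((t,σ),k,m),s)
  have hin : Primrec fun q : ((ℕ × List Bool) × ℕ × ℕ) × ℕ =>
      (Nat.Partrec.Code.evaln q.2 c₀
        (Nat.pair (Encodable.encode (falseList q.1.2.1))
          (Nat.pair (Encodable.encode q.1.1.2) q.1.2.2))).isSome := by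
    have harg : Primrec fun q : ((ℕ × List Bool) × ℕ × ℕ) × ℕ =>
        Nat.pair (Encodable.encode (falseList q.1.2.1))
          (Nat.pair (Encodable.encode q.1.1.2) q.1.2.2) :=
      Primrec₂.natPair.comp
        (Primrec.encode.comp (primrec_falseList.comp
          (Primrec.fst.comp (Primrec.snd.comp Primrec.fst))))
        (Primrec₂.natPair.comp
          (Primrec.encode.comp (Primrec.snd.comp (Primrec.fst.comp Primrec.fst)))
          (Primrec.snd.comp (Primrec.snd.comp Primrec.fst)))
    exact Primrec.option_isSome.comp
      (Nat.Partrec.Code.primrec_evaln.comp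
        ((Primrec.snd.pair (Primrec.const c₀)).pair harg))
  -- any over s, on ((t,σ),k,m)
  have h1 : Primrec fun q : (ℕ × List Bool) × ℕ × ℕ =>
      (List.range (q.1.1 + 1)).any fun s =>
        (Nat.Partrec.Code.evaln s c₀
          (Nat.pair (Encodable.encode (falseList q.2.1))
            (Nat.pair (Encodable.encode q.1.2) q.2.2))).isSome :=
    primrec_list_any
      (Primrec.list_range.comp (Primrec.succ.comp (Primrec.fst.comp Primrec.fst)))
      hin.to₂
  -- any over m, on ((t,σ),k)
  have h2 : Primrec fun q : (ℕ × List Bool) × ℕ =>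
      (List.range (q.1.1 + 1)).any fun m =>
        (List.range (q.1.1 + 1)).any fun s =>
          (Nat.Partrec.Code.evaln s c₀
            (Nat.pair (Encodable.encode (falseList q.2))
              (Nat.pair (Encodable.encode q.1.2) m))).isSome := by
    have := primrec_list_any
      (f := fun q : (ℕ × List Bool) × ℕ => List.range (q.1.1 + 1))
      (p := fun (q : (ℕ × List Bool) × ℕ) (m : ℕ) =>
        (List.range (q.1.1 + 1)).any fun s =>
          (Nat.Partrec.Code.evaln s c₀
            (Nat.pair (Encodable.encode (falseList q.2))
              (Nat.pair (Encodable.encode q.1.2) m))).isSome)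
      (Primrec.list_range.comp (Primrec.succ.comp (Primrec.fst.comp Primrec.fst)))
      ?_
    · exact this
    · -- p as Primrec₂, domain ((ℕ × List Bool) × ℕ) × ℕ
      have := h1.comp
        (g := fun q : ((ℕ × List Bool) × ℕ) × ℕ => (q.1.1, q.1.2, q.2))
        ((Primrec.fst.comp Primrec.fst).pair
          ((Primrec.snd.comp Primrec.fst).pair Primrec.snd))
      exact this.to₂
  -- any over k, on (t,σ)
  have h3 : Primrec fun q : ℕ × List Bool =>
      (List.range (q.1 + 1)).any fun k =>
        (List.range (q.1 + 1)).any fun m =>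
          (List.range (q.1 + 1)).any fun s =>
            (Nat.Partrec.Code.evaln s c₀
              (Nat.pair (Encodable.encode (falseList k))
                (Nat.pair (Encodable.encode q.2) m))).isSome := by
    have := primrec_list_any
      (f := fun q : ℕ × List Bool => List.range (q.1 + 1))
      (p := fun (q : ℕ × List Bool) (k : ℕ) =>
        (List.range (q.1 + 1)).any fun m =>
          (List.range (q.1 + 1)).any fun s =>
            (Nat.Partrec.Code.evaln s c₀
              (Nat.pair (Encodable.encode (falseList k))
                (Nat.pair (Encodable.encode q.2) m))).isSome)
      (Primrec.list_range.comp (Primrec.succ.comp Primrec.fst))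
      (h2.comp (g := fun q : (ℕ × List Bool) × ℕ => (q.1, q.2)) Primrec.id).to₂
    exact this
  exact h3.to₂.of_eq fun t σ => rfl

lemma primrec_pref : Primrec₂ pref := by
  unfold pref
  exact (Primrec.list_map
    (Primrec.list_range.comp Primrec.snd)
    ((Primrec.list_getD false).comp
      (Primrec.fst.comp Primrec.fst) Primrec.snd).to₂).to₂

lemma primrec_qB (e₀ : ℕ) : Primrec (qB e₀) := by
  unfold qB
  apply primrec_list_any
    (f := fun τ : List Bool => List.range (τ.length + 1))
    (p := fun τ i => sStage e₀ τ.length (pref τ i))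
  · exact Primrec.list_range.comp (Primrec.succ.comp Primrec.list_length)
  · exact ((primrec_sStage e₀).comp
      (Primrec.list_length.comp Primrec.fst)
      (primrec_pref.comp Primrec.fst Primrec.snd)).to₂

lemma primrec_wB (e₀ : ℕ) : Primrec (wB e₀) := by
  unfold wB
  apply Primrec.and.comp (primrec_qB e₀)
  apply primrec_list_all
    (f := fun τ : List Bool => List.range τ.length)
    (p := fun τ i => ! qB e₀ (pref τ i))
  · exact Primrec.list_range.comp Primrec.list_length
  · exact (Primrec.not.comp ((primrec_qB e₀).comp
      (primrec_pref.comp Primrec.fst Primrec.snd))).to₂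

lemma primrec_witCheck (e₀ : ℕ) :
    Primrec fun q : ℕ × List Bool × List (List Bool) => witCheck e₀ q.1 q.2.1 q.2.2 := by
  unfold witCheck
  apply Primrec.and.comp
  · apply Primrec.and.comp
    · exact (Primrec.eq (α := ℕ)).decide.comp
        (Primrec.list_length.comp (Primrec.snd.comp Primrec.snd)) Primrec.fst
    · exact primrec_list_all
        (f := fun q : ℕ × List Bool × List (List Bool) => q.2.2)
        (p := fun _ ρ => wB e₀ ρ)
        (Primrec.snd.comp Primrec.snd)
        ((primrec_wB e₀).comp Primrec.snd).to₂
  · exact (Primrec.eq (α := List Bool)).decide.comp (Primrec.fst.comp Primrec.snd)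
      (Primrec.list_flatten.comp (Primrec.snd.comp Primrec.snd))

/-! ### The universal-machine index for the test -/

def checkFn (e₀ m₀ : ℕ) (x : ℕ) : Bool :=
  ((Encodable.decode (α := List Bool) x.unpair.2.unpair.1.unpair.2).bind fun σ =>
    (Encodable.decode (α := List (List Bool)) x.unpair.2.unpair.2).map fun L =>
      witCheck e₀ (m₀ * x.unpair.2.unpair.1.unpair.1) σ L).getD false

lemma primrec_checkFn (e₀ m₀ : ℕ) : Primrec (checkFn e₀ m₀) := by
  unfold checkFn
  have hy : Primrec fun x : ℕ => x.unpair.2 := Primrec.snd.comp Primrec.unpair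
  have hn : Primrec fun x : ℕ => x.unpair.2.unpair.1.unpair.1 :=
    Primrec.fst.comp (Primrec.unpair.comp (Primrec.fst.comp (Primrec.unpair.comp hy)))
  have hs : Primrec fun x : ℕ => x.unpair.2.unpair.1.unpair.2 :=
    Primrec.snd.comp (Primrec.unpair.comp (Primrec.fst.comp (Primrec.unpair.comp hy)))
  have hm : Primrec fun x : ℕ => x.unpair.2.unpair.2 :=
    Primrec.snd.comp (Primrec.unpair.comp hy)
  have hdσ : Primrec fun x : ℕ => Encodable.decode (α := List Bool) x.unpair.2.unpair.1.unpair.2 :=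
    Primrec.decode.comp hs
  have hbind : Primrec fun x : ℕ =>
      ((Encodable.decode (α := List Bool) x.unpair.2.unpair.1.unpair.2).bind fun σ =>
        (Encodable.decode (α := List (List Bool)) x.unpair.2.unpair.2).map fun L =>
          witCheck e₀ (m₀ * x.unpair.2.unpair.1.unpair.1) σ L) := by
    have harg : Primrec fun q : (ℕ × List Bool) × List (List Bool) =>
        ((m₀ * q.1.1.unpair.2.unpair.1.unpair.1, q.1.2, q.2) :
          ℕ × List Bool × List (List Bool)) :=
      ((Primrec.nat_mul.comp (Primrec.const m₀)
          (hn.comp (Primrec.fst.comp Primrec.fst))).pair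
        ((Primrec.snd.comp Primrec.fst).pair Primrec.snd))
    have hmap : Primrec fun p : ℕ × List Bool =>
        Option.map (fun L => witCheck e₀ (m₀ * p.1.unpair.2.unpair.1.unpair.1) p.2 L)
          (Encodable.decode (α := List (List Bool)) p.1.unpair.2.unpair.2) :=
      Primrec.option_map (Primrec.decode.comp (hm.comp Primrec.fst))
        ((primrec_witCheck e₀).comp harg).to₂
    exact Primrec.option_bind hdσ hmap.to₂
  exact Primrec.option_getD.comp hbind (Primrec.const false)

theorem test_machine (e₀ m₀ : ℕ) : ∃ e : ℕ, ∀ (n : ℕ) (σ : List Bool),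
    (∃ m, OracleComputes e emptyOracle (Nat.pair n (Encodable.encode σ)) m) ↔
      σ ∈ Tset e₀ (m₀ * n) := by
  classical
  set g : ℕ → Option ℕ := fun x => bif checkFn e₀ m₀ x then some 0 else none with hg
  have hgc : Computable g :=
    Primrec.to_comp (Primrec.cond (primrec_checkFn e₀ m₀)
      (Primrec.const (some 0)) (Primrec.const none))
  have hpart : Nat.Partrec (fun x => (g x : Part ℕ)) :=
    Partrec.nat_iff.1 (Computable.ofOption hgc)
  obtain ⟨c, hc⟩ := Nat.Partrec.Code.exists_code.1 hpart
  refine ⟨Encodable.encode c, fun n σ => ?_⟩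
  have hW : ∀ x : ℕ, WEnum (Encodable.encode c) x ↔ checkFn e₀ m₀ x = true := by
    intro x
    rw [WEnum, Denumerable.ofNat_encode, hc]
    cases hch : checkFn e₀ m₀ x <;>
      · simp only [hg, hch]
        simp [Part.ofOption]
  constructor
  · rintro ⟨m, ρ, hρ, hWe⟩
    rw [hW] at hWe
    rw [checkFn] at hWe
    simp only [Nat.unpair_pair] at hWe
    rw [Encodable.encodek] at hWe
    rw [Option.bind_some] at hWe
    cases hdm : Encodable.decode (α := List (List Bool)) m with
    | none => rw [hdm] at hWe; simp at hWe
    | some L =>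
        rw [hdm] at hWe
        rw [Option.map_some, Option.getD_some] at hWe
        exact ⟨L, hWe⟩
  · rintro ⟨L, hL⟩
    refine ⟨Encodable.encode L, [], isPrefixOf_nil _, ?_⟩
    rw [hW, checkFn]
    simp only [Nat.unpair_pair]
    rw [Encodable.encodek, Encodable.encodek]
    simpa using hL

theorem testLevel_eq (e₀ m₀ : ℕ) : ∃ e : ℕ, ∀ n : ℕ,
    testLevel e emptyOracle n = openOf (Tset e₀ (m₀ * n)) := by
  obtain ⟨e, he⟩ := test_machine e₀ m₀
  refine ⟨e, fun n => ?_⟩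
  have hset : {σ : List Bool |
      ∃ m, OracleComputes e emptyOracle (Nat.pair n (Encodable.encode σ)) m}
      = Tset e₀ (m₀ * n) := Set.ext (he n)
  rw [testLevel, hset]

/-- Kučera: every Martin-Löf random sequence has a tail in any
`Π⁰₁` class of positive measure. -/
theorem stmt6 (P : Set (ℕ → Bool)) (hP : Pi01 P) (hpos : 0 < μCantor P)
    (X : ℕ → Bool) (hX : MLRandom X) :
    ∃ k, tailSeq X k ∈ P := by
  classical
  by_contra hcon
  push_neg at hcon
  obtain ⟨S, hSce, hPeq⟩ := hP
  obtain ⟨e₀, hS⟩ := hSce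
  -- measure of the open complement is < 1
  have hμP : μCantor P = 1 - μCantor (openOf S) := by
    rw [hPeq, measure_compl (measurableSet_openOf S) (ne_of_lt
      (lt_of_le_of_lt (measure_mono (Set.subset_univ _)) (by rw [μCantor_univ]; exact ENNReal.one_lt_top))),
      μCantor_univ]
  have ha : μCantor (openOf S) < 1 := by
    rw [hμP] at hpos
    exact tsub_pos_iff_lt.1 hpos
  -- the prefix-free refinement has the same open set
  have hWeq : openOf (Wset e₀) = openOf S :=
    Set.Subset.antisymm (openOf_Wset_sub hS) (fun Y hY => mem_openOf_Wset hS hY)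
  have hw : weight (Wset e₀) < 1 := by
    rw [← μ_openOf_prefixFree (Wset_prefixFree e₀), hWeq]
    exact ha
  -- choose m₀ with (weight W)^{m₀} ≤ 1/2
  obtain ⟨m₀, hm₀⟩ : ∃ m₀ : ℕ, weight (Wset e₀) ^ m₀ ≤ 2⁻¹ := by
    have ht := ENNReal.tendsto_pow_atTop_nhds_zero_of_lt_one hw
    have h2 : (0 : ℝ≥0∞) < 2⁻¹ := by norm_num
    obtain ⟨m₀, hm₀⟩ := (ht.eventually (gt_mem_nhds h2)).exists
    exact ⟨m₀, le_of_lt hm₀⟩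
  obtain ⟨e, he⟩ := testLevel_eq e₀ m₀
  set G : ℕ → Set (ℕ → Bool) := fun n => testLevel e emptyOracle n with hG
  have hml : MLTestIn emptyOracle G := by
    refine ⟨⟨e, fun n => rfl⟩, fun n => ?_⟩
    have : μCantor (G n) ≤ weight (Tset e₀ (m₀ * n)) := by
      rw [hG]
      simp only []
      rw [he n]
      exact μ_openOf_le_weight _
    refine le_trans this ?_
    calc weight (Tset e₀ (m₀ * n)) ≤ weight (Wset e₀) ^ (m₀ * n) := weight_Tset_le _ _
      _ = (weight (Wset e₀) ^ m₀) ^ n := by rw [← pow_mul]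
      _ ≤ 2⁻¹ ^ n := pow_le_pow_left' hm₀ n
  have htail : ∀ k, tailSeq X k ∈ openOf (Wset e₀) := by
    intro k
    apply mem_openOf_Wset hS
    have h1 := hcon k
    rw [hPeq] at h1
    exact Set.not_notMem.1 (by simpa using h1)
  have hchain : ∀ r, ∃ σ, σ ∈ Tset e₀ r ∧ IsPrefixOf σ X := by
    intro r
    induction r with
    | zero => exact ⟨[], Tset_zero.2 rfl, isPrefixOf_nil X⟩
    | succ r ih =>
        obtain ⟨σ, hσT, hσX⟩ := ih
        have h2 := htail σ.length
        simp only [openOf, Set.mem_iUnion] at h2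
        obtain ⟨ρ, hρW, hρpre⟩ := h2
        refine ⟨σ ++ ρ, Tset_append hσT hρW, isPrefixOf_append hσX ?_⟩
        exact hρpre
  have hXG : ∀ n, X ∈ G n := by
    intro n
    obtain ⟨σ, hσT, hσX⟩ := hchain (m₀ * n)
    have : X ∈ openOf (Tset e₀ (m₀ * n)) := by
      simp only [openOf, Set.mem_iUnion]
      exact ⟨σ, hσT, hσX⟩
    rw [hG]
    simp only []
    rw [he n]
    exact this
  obtain ⟨n, hn⟩ := hX G hml
  exact hn (hXG n)
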